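/- arXiv:1409.4332 — 2 statements merged into one kernel-verified Lean document; each statement's English description precedes it below -/
import Mathlib

section
/- Suppose ψ : G → ℝ is a function of conditionally negative type on a group G. Then for every t > 0 the function g ↦ e^{−tψ(g)} is positive definite on G (Schoenberg's theorem). -/
open scoped ComplexOrder
/-- A function `ψ : G → ℝ` on a group is of *conditionally negative type* if `ψ(e) = 0`,
`ψ(g⁻¹) = ψ(g)`, and `∑ᵢⱼ cᵢ cⱼ ψ(gᵢ⁻¹ gⱼ) ≤ 0` whenever `∑ᵢ cᵢ = 0`. -/
structure IsCondNegType {G : Type*} [Group G] (ψ : G → ℝ) : Prop where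
  map_one : ψ 1 = 0
  map_inv : ∀ g : G, ψ g⁻¹ = ψ g
  neg_type : ∀ (n : ℕ) (g : Fin n → G) (c : Fin n → ℝ), (∑ i, c i) = 0 →
    ∑ i, ∑ j, c i * c j * ψ ((g i)⁻¹ * g j) ≤ 0

/-- A function `φ : G → ℂ` is *positive definite* if all the matrices
`[φ(gᵢ⁻¹ gⱼ)]` are positive semidefinite. -/
def IsPosDefFn {G : Type*} [Group G] (φ : G → ℂ) : Prop :=
  ∀ (n : ℕ) (g : Fin n → G),
    (Matrix.of fun i j : Fin n => φ ((g i)⁻¹ * g j)).PosSemidef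

namespace SchoenbergAux

open Finset

variable {n : ℕ}

lemma form_nonneg_of_posSemidef {B : Matrix (Fin n) (Fin n) ℝ} (hB : B.PosSemidef)
    (x : Fin n → ℝ) : 0 ≤ ∑ i, ∑ j, x i * x j * B i j := by
  have h := hB.dotProduct_mulVec_nonneg x
  simp only [dotProduct, Matrix.mulVec, Pi.star_apply, star_trivial,
    Finset.mul_sum] at h
  calc (0 : ℝ) ≤ ∑ i, ∑ j, x i * (B i j * x j) := h
    _ = ∑ i, ∑ j, x i * x j * B i j :=
        Finset.sum_congr rfl fun i _ => Finset.sum_congr rfl fun j _ => by ring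

lemma posSemidef_of_form {B : Matrix (Fin n) (Fin n) ℝ}
    (hsym : ∀ i j, B j i = B i j)
    (h : ∀ x : Fin n → ℝ, 0 ≤ ∑ i, ∑ j, x i * x j * B i j) : B.PosSemidef := by
  rw [Matrix.posSemidef_iff_dotProduct_mulVec]
  constructor
  · ext i j
    simpa [Matrix.conjTranspose_apply] using hsym i j
  · intro x
    have h' := h x
    simp only [dotProduct, Matrix.mulVec, Pi.star_apply, star_trivial,
      Finset.mul_sum]
    calc (0 : ℝ) ≤ ∑ i, ∑ j, x i * x j * B i j := h'
      _ = ∑ i, ∑ j, x i * (B i j * x j) :=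
          Finset.sum_congr rfl fun i _ => Finset.sum_congr rfl fun j _ => by ring

/-- Schur product theorem at the level of quadratic forms. -/
lemma schur_form {B : Matrix (Fin n) (Fin n) ℝ} (hB : B.PosSemidef)
    (C : Fin n → Fin n → ℝ) (hC : ∀ x : Fin n → ℝ, 0 ≤ ∑ i, ∑ j, x i * x j * C i j)
    (x : Fin n → ℝ) : 0 ≤ ∑ i, ∑ j, x i * x j * (B i j * C i j) := by
  obtain ⟨m, U, hU⟩ := Matrix.posSemidef_iff_eq_sum_vecMulVec.mp hB
  have hBij : ∀ i j, B i j = ∑ k, U k i * U k j := by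
    intro i j
    rw [hU]
    simp [Matrix.sum_apply, Matrix.vecMulVec_apply]
  calc ∑ i, ∑ j, x i * x j * (B i j * C i j)
      = ∑ i, ∑ j, ∑ k, (x i * U k i) * ((x j * U k j) * C i j) := by
        refine Finset.sum_congr rfl fun i _ => Finset.sum_congr rfl fun j _ => ?_
        rw [hBij i j, Finset.sum_mul, Finset.mul_sum]
        exact Finset.sum_congr rfl fun k _ => by ring
    _ = ∑ i, ∑ k, ∑ j, (x i * U k i) * ((x j * U k j) * C i j) :=
        Finset.sum_congr rfl fun i _ => Finset.sum_comm
    _ = ∑ k, ∑ i, ∑ j, (x i * U k i) * ((x j * U k j) * C i j) := Finset.sum_comm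
    _ ≥ 0 := by
        refine Finset.sum_nonneg fun k _ => ?_
        have := hC fun i => x i * U k i
        calc (0:ℝ) ≤ ∑ i, ∑ j, (x i * U k i) * (x j * U k j) * C i j := this
          _ = ∑ i, ∑ j, (x i * U k i) * ((x j * U k j) * C i j) :=
            Finset.sum_congr rfl fun i _ => Finset.sum_congr rfl fun j _ => by ring

lemma pow_form {B : Matrix (Fin n) (Fin n) ℝ} (hB : B.PosSemidef) :
    ∀ (k : ℕ) (x : Fin n → ℝ), 0 ≤ ∑ i, ∑ j, x i * x j * B i j ^ k
  | 0, x => by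
    have : ∑ i, ∑ j, x i * x j * B i j ^ 0 = (∑ i, x i) * (∑ j, x j) := by
      rw [Finset.sum_mul_sum]
      simp
    rw [this, ← sq]
    exact sq_nonneg _
  | (k + 1), x => by
    have h := schur_form hB (fun i j => B i j ^ k) (fun y => pow_form hB k y) x
    calc (0:ℝ) ≤ ∑ i, ∑ j, x i * x j * (B i j * B i j ^ k) := h
      _ = ∑ i, ∑ j, x i * x j * B i j ^ (k + 1) :=
        Finset.sum_congr rfl fun i _ => Finset.sum_congr rfl fun j _ => by ring

lemma exp_form {B : Matrix (Fin n) (Fin n) ℝ} (hB : B.PosSemidef) (x : Fin n → ℝ) :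
    0 ≤ ∑ i, ∑ j, x i * x j * Real.exp (B i j) := by
  have hexp : ∀ a : ℝ, Real.exp a = ∑' k : ℕ, a ^ k / (Nat.factorial k) := fun a => by
    rw [Real.exp_eq_exp_ℝ, NormedSpace.exp_eq_tsum_div]
  have hsum : ∀ i j : Fin n, Summable fun k : ℕ => x i * x j * (B i j ^ k / (Nat.factorial k)) :=
    fun i j => (Real.summable_pow_div_factorial (B i j)).mul_left _
  have key : ∑ i, ∑ j, x i * x j * Real.exp (B i j)
      = ∑' k : ℕ, ∑ i, ∑ j, x i * x j * (B i j ^ k / (Nat.factorial k)) := by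
    have h1 : ∑ i, ∑ j, x i * x j * Real.exp (B i j)
        = ∑ i, ∑ j, ∑' k : ℕ, x i * x j * (B i j ^ k / (Nat.factorial k)) := by
      refine Finset.sum_congr rfl fun i _ => Finset.sum_congr rfl fun j _ => ?_
      rw [hexp (B i j), ← tsum_mul_left]
    rw [h1]
    have h2 : ∀ i : Fin n, ∑ j, ∑' k : ℕ, x i * x j * (B i j ^ k / (Nat.factorial k))
        = ∑' k : ℕ, ∑ j, x i * x j * (B i j ^ k / (Nat.factorial k)) :=
      fun i => (Summable.tsum_finsetSum fun j _ => hsum i j).symm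
    rw [Finset.sum_congr rfl fun i _ => h2 i]
    exact (Summable.tsum_finsetSum fun i _ => summable_sum fun j _ => hsum i j).symm
  rw [key]
  refine tsum_nonneg fun k => ?_
  have : ∑ i, ∑ j, x i * x j * (B i j ^ k / (Nat.factorial k))
      = (∑ i, ∑ j, x i * x j * B i j ^ k) / (Nat.factorial k) := by
    rw [Finset.sum_div]
    refine Finset.sum_congr rfl fun i _ => ?_
    rw [Finset.sum_div]
    exact Finset.sum_congr rfl fun j _ => by ring
  rw [this]
  exact div_nonneg (pow_form hB k x) (Nat.cast_nonneg _)

/-- Lift of real positive semidefiniteness to the complexification. -/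
lemma posSemidef_map {A : Matrix (Fin n) (Fin n) ℝ} (hA : A.PosSemidef) :
    (A.map (Complex.ofReal)).PosSemidef := by
  have hsym : ∀ i j, A j i = A i j := by
    intro i j
    have := congrFun (congrFun hA.1 i) j
    simpa [Matrix.conjTranspose_apply] using this
  rw [Matrix.posSemidef_iff_dotProduct_mulVec]
  constructor
  · ext i j
    simp [Matrix.conjTranspose_apply, Matrix.map_apply, Complex.conj_ofReal, hsym i j]
  · intro x
    have expand : dotProduct (star x) ((A.map Complex.ofReal).mulVec x)
        = ∑ i, ∑ j, (starRingEnd ℂ) (x i) * ((A i j : ℂ) * x j) := by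
      simp [dotProduct, Matrix.mulVec, Matrix.map_apply, Finset.mul_sum,
        RCLike.star_def]
    rw [expand, Complex.nonneg_iff]
    constructor
    · have hre : (∑ i, ∑ j, (starRingEnd ℂ) (x i) * ((A i j : ℂ) * x j)).re
          = (∑ i, ∑ j, (x i).re * (x j).re * A i j)
            + ∑ i, ∑ j, (x i).im * (x j).im * A i j := by
        simp only [Complex.re_sum, Complex.mul_re, Complex.mul_im, Complex.ofReal_re,
          Complex.ofReal_im, Complex.conj_re, Complex.conj_im]
        rw [← Finset.sum_add_distrib]
        refine Finset.sum_congr rfl fun i _ => ?_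
        rw [← Finset.sum_add_distrib]
        exact Finset.sum_congr rfl fun j _ => by ring
      rw [hre]
      exact add_nonneg (form_nonneg_of_posSemidef hA fun i => (x i).re)
        (form_nonneg_of_posSemidef hA fun i => (x i).im)
    · have him : (∑ i, ∑ j, (starRingEnd ℂ) (x i) * ((A i j : ℂ) * x j)).im
          = (∑ i, ∑ j, (x i).re * (x j).im * A i j)
            - ∑ i, ∑ j, (x i).im * (x j).re * A i j := by
        simp only [Complex.im_sum, Complex.mul_re, Complex.mul_im, Complex.ofReal_re,
          Complex.ofReal_im, Complex.conj_re, Complex.conj_im]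
        rw [← Finset.sum_sub_distrib]
        refine Finset.sum_congr rfl fun i _ => ?_
        rw [← Finset.sum_sub_distrib]
        exact Finset.sum_congr rfl fun j _ => by ring
      rw [him]
      have : (∑ i, ∑ j, (x i).re * (x j).im * A i j)
          = ∑ i, ∑ j, (x i).im * (x j).re * A i j := by
        rw [Finset.sum_comm]
        refine Finset.sum_congr rfl fun i _ => Finset.sum_congr rfl fun j _ => ?_
        rw [hsym j i]
        ring
      rw [this, sub_self]

/-- The kernel `ψ(gᵢ) + ψ(gⱼ) − ψ(gᵢ⁻¹gⱼ)` associated with a conditionally negative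
type function is positive semidefinite. -/
lemma cnt_kernel_posSemidef {G : Type*} [Group G] {ψ : G → ℝ} (hψ : IsCondNegType ψ)
    (g : Fin n → G) :
    (Matrix.of fun i j : Fin n => ψ (g i) + ψ (g j) - ψ ((g i)⁻¹ * g j)).PosSemidef := by
  refine posSemidef_of_form ?_ ?_
  · intro i j
    have : ψ ((g j)⁻¹ * g i) = ψ ((g i)⁻¹ * g j) := by
      rw [← hψ.map_inv ((g j)⁻¹ * g i)]
      simp [mul_inv_rev]
    simp only [Matrix.of_apply]
    rw [this]
    ring
  · intro x
    set s := ∑ i, x i with hs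
    set T := ∑ i, x i * ψ (g i) with hT
    have hrow : ∑ j, -s * x j * ψ (g j) = -(s * T) := by
      calc ∑ j, -s * x j * ψ (g j) = ∑ j, -(s * (x j * ψ (g j))) :=
            Finset.sum_congr rfl fun j _ => by ring
        _ = -(s * ∑ j, x j * ψ (g j)) := by rw [Finset.sum_neg_distrib, Finset.mul_sum]
        _ = -(s * T) := by rw [hT]
    have key : ∑ i : Fin (n+1), ∑ j : Fin (n+1),
          (Fin.cons (-s) x : Fin (n+1) → ℝ) i * (Fin.cons (-s) x : Fin (n+1) → ℝ) j *
            ψ (((Fin.cons 1 g : Fin (n+1) → G) i)⁻¹ * (Fin.cons 1 g : Fin (n+1) → G) j)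
        = (∑ i, ∑ j, x i * x j * ψ ((g i)⁻¹ * g j)) - 2 * s * T := by
      rw [Fin.sum_univ_succ]
      have h0 : ∑ j : Fin (n+1), (Fin.cons (-s) x : Fin (n+1) → ℝ) 0 *
            (Fin.cons (-s) x : Fin (n+1) → ℝ) j *
            ψ (((Fin.cons 1 g : Fin (n+1) → G) 0)⁻¹ * (Fin.cons 1 g : Fin (n+1) → G) j)
          = -(s * T) := by
        rw [Fin.sum_univ_succ]
        simp only [Fin.cons_zero, Fin.cons_succ, inv_one, one_mul, hψ.map_one, mul_zero,
          zero_add]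
        exact hrow
      have h1 : ∀ i : Fin n, ∑ j : Fin (n+1),
            (Fin.cons (-s) x : Fin (n+1) → ℝ) i.succ * (Fin.cons (-s) x : Fin (n+1) → ℝ) j *
            ψ (((Fin.cons 1 g : Fin (n+1) → G) i.succ)⁻¹ * (Fin.cons 1 g : Fin (n+1) → G) j)
          = -(x i * s * ψ (g i)) + ∑ j, x i * x j * ψ ((g i)⁻¹ * g j) := by
        intro i
        rw [Fin.sum_univ_succ]
        simp only [Fin.cons_zero, Fin.cons_succ, mul_one]
        rw [hψ.map_inv]
        ring_nf
      rw [h0, Finset.sum_congr rfl fun i _ => h1 i, Finset.sum_add_distrib]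
      have h2 : ∑ i, -(x i * s * ψ (g i)) = -(s * T) := by
        calc ∑ i, -(x i * s * ψ (g i)) = ∑ i, -(s * (x i * ψ (g i))) :=
              Finset.sum_congr rfl fun i _ => by ring
          _ = -(s * ∑ i, x i * ψ (g i)) := by rw [Finset.sum_neg_distrib, Finset.mul_sum]
          _ = -(s * T) := by rw [hT]
      rw [h2]
      ring
    have h := hψ.neg_type (n + 1) (Fin.cons 1 g) (Fin.cons (-s) x) (by
      rw [Fin.sum_cons]
      simp [hs])
    rw [key] at h
    -- now h : S - 2sT ≤ 0
    have hgoal : ∑ i, ∑ j, x i * x j * ((Matrix.of fun i j : Fin n =>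
          ψ (g i) + ψ (g j) - ψ ((g i)⁻¹ * g j)) i j)
        = 2 * s * T - ∑ i, ∑ j, x i * x j * ψ ((g i)⁻¹ * g j) := by
      have h1 : ∑ i, ∑ j, x i * x j * ψ (g i) = T * s := by
        rw [hT, hs, Finset.sum_mul_sum]
        exact Finset.sum_congr rfl fun i _ => Finset.sum_congr rfl fun j _ => by ring
      have h2 : ∑ i, ∑ j, x i * x j * ψ (g j) = s * T := by
        rw [hT, hs, Finset.sum_mul_sum]
        exact Finset.sum_congr rfl fun i _ => Finset.sum_congr rfl fun j _ => by ring
      calc ∑ i, ∑ j, x i * x j * ((Matrix.of fun i j : Fin n =>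
            ψ (g i) + ψ (g j) - ψ ((g i)⁻¹ * g j)) i j)
          = ∑ i, ∑ j, (x i * x j * ψ (g i) + x i * x j * ψ (g j)
              - x i * x j * ψ ((g i)⁻¹ * g j)) := by
            refine Finset.sum_congr rfl fun i _ => Finset.sum_congr rfl fun j _ => ?_
            simp only [Matrix.of_apply]
            ring
        _ = (∑ i, ∑ j, (x i * x j * ψ (g i) + x i * x j * ψ (g j)))
              - ∑ i, ∑ j, x i * x j * ψ ((g i)⁻¹ * g j) := by
            rw [← Finset.sum_sub_distrib]
            refine Finset.sum_congr rfl fun i _ => ?_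
            rw [← Finset.sum_sub_distrib]
        _ = (∑ i, ∑ j, x i * x j * ψ (g i)) + (∑ i, ∑ j, x i * x j * ψ (g j))
              - ∑ i, ∑ j, x i * x j * ψ ((g i)⁻¹ * g j) := by
            rw [← Finset.sum_add_distrib]
            congr 1
            refine Finset.sum_congr rfl fun i _ => ?_
            rw [← Finset.sum_add_distrib]
        _ = 2 * s * T - ∑ i, ∑ j, x i * x j * ψ ((g i)⁻¹ * g j) := by
            rw [h1, h2]; ring
    rw [hgoal]
    linarith

end SchoenbergAux

/-- **Schoenberg's theorem**: if `ψ : G → ℝ` is of conditionally negative type, then for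
every `t > 0` the function `g ↦ e^{−tψ(g)}` is positive definite on `G`. -/
theorem schoenberg {G : Type*} [Group G] (ψ : G → ℝ) (hψ : IsCondNegType ψ) :
    ∀ t : ℝ, 0 < t → IsPosDefFn (fun g : G => (Real.exp (-t * ψ g) : ℂ)) := by
  intro t ht n g
  -- the real matrix
  set Mr : Matrix (Fin n) (Fin n) ℝ :=
    Matrix.of fun i j : Fin n => Real.exp (-t * ψ ((g i)⁻¹ * g j)) with hMr
  have hA : (Matrix.of fun i j : Fin n =>
      ψ (g i) + ψ (g j) - ψ ((g i)⁻¹ * g j)).PosSemidef :=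
    SchoenbergAux.cnt_kernel_posSemidef hψ g
  -- t • A is PSD
  have htA : (Matrix.of fun i j : Fin n =>
      t * (ψ (g i) + ψ (g j) - ψ ((g i)⁻¹ * g j))).PosSemidef := by
    refine SchoenbergAux.posSemidef_of_form ?_ ?_
    · intro i j
      have := congrFun (congrFun hA.1 i) j
      simp only [Matrix.conjTranspose_apply, Matrix.of_apply, star_trivial] at this
      simp only [Matrix.of_apply]
      rw [this]
    · intro x
      have h := SchoenbergAux.form_nonneg_of_posSemidef hA x
      have : ∑ i, ∑ j, x i * x j * ((Matrix.of fun i j : Fin n =>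
            t * (ψ (g i) + ψ (g j) - ψ ((g i)⁻¹ * g j))) i j)
          = t * ∑ i, ∑ j, x i * x j * ((Matrix.of fun i j : Fin n =>
            ψ (g i) + ψ (g j) - ψ ((g i)⁻¹ * g j)) i j) := by
        rw [Finset.mul_sum]
        refine Finset.sum_congr rfl fun i _ => ?_
        rw [Finset.mul_sum]
        refine Finset.sum_congr rfl fun j _ => ?_
        simp only [Matrix.of_apply]
        ring
      rw [this]
      exact mul_nonneg ht.le h
  -- Mr is PSD over ℝ
  have hMrP : Mr.PosSemidef := by
    refine SchoenbergAux.posSemidef_of_form ?_ ?_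
    · intro i j
      have : ψ ((g j)⁻¹ * g i) = ψ ((g i)⁻¹ * g j) := by
        rw [← hψ.map_inv ((g j)⁻¹ * g i)]
        simp [mul_inv_rev]
      simp only [hMr, Matrix.of_apply, this]
    · intro x
      -- substitute y i = exp(-t ψ(g i)) * x i
      have hform := SchoenbergAux.exp_form htA (fun i => Real.exp (-t * ψ (g i)) * x i)
      calc (0:ℝ) ≤ ∑ i, ∑ j, (Real.exp (-t * ψ (g i)) * x i) * (Real.exp (-t * ψ (g j)) * x j)
            * Real.exp ((Matrix.of fun i j : Fin n =>
              t * (ψ (g i) + ψ (g j) - ψ ((g i)⁻¹ * g j))) i j) := hform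
        _ = ∑ i, ∑ j, x i * x j * Mr i j := by
            refine Finset.sum_congr rfl fun i _ => Finset.sum_congr rfl fun j _ => ?_
            simp only [Matrix.of_apply, hMr]
            rw [show -t * ψ ((g i)⁻¹ * g j) = -t * ψ (g i) + -t * ψ (g j)
              + t * (ψ (g i) + ψ (g j) - ψ ((g i)⁻¹ * g j)) by ring,
              Real.exp_add, Real.exp_add]
            ring
  -- pass to ℂ
  have heq : Mr.map Complex.ofReal =
      Matrix.of fun i j : Fin n => ((Real.exp (-t * ψ ((g i)⁻¹ * g j)) : ℝ) : ℂ) := by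
    ext i j
    simp [hMr]
  exact heq ▸ SchoenbergAux.posSemidef_map hMrP
end

section
/- Let G be a compact group acting continuously on a compact Hausdorff space X, with normalized Haar measure, and let c ∈ C(X) be nonnegative with ∫_G c²(s⁻¹x) ds = 1 for all x ∈ X. Then the function p(s,x) = c(x)·c(s⁻¹x) defines an element p of the convolution *-algebra C(G, C(X)) satisfying p * p = p and p* = p. -/
open MeasureTheory

/-- Let `G` be a compact group acting continuously on a compact Hausdorff space `X`, with
normalized Haar measure `μ`, and let `c ∈ C(X)` be nonnegative with
`∫_G c²(s⁻¹x) ds = 1` for all `x ∈ X`.  Then the function `p(s,x) = c(x)·c(s⁻¹x)`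
defines an element `p` of the convolution `*`-algebra `C(G, C(X))` satisfying
`p * p = p` and `p* = p`, where `(f*g)(t)(x) = ∫_G f(s)(x)·g(s⁻¹t)(s⁻¹•x) ds` and
`f*(t)(x) = f(t⁻¹)(t⁻¹•x)` (the modular function being `1` since `G` is compact). -/
theorem cutoff_projection_of_compact_group
    {G X : Type*} [Group G] [TopologicalSpace G] [IsTopologicalGroup G] [CompactSpace G]
    [MeasurableSpace G] [BorelSpace G]
    (μ : Measure G) [μ.IsHaarMeasure] [IsProbabilityMeasure μ]
    [TopologicalSpace X] [CompactSpace X] [T2Space X]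
    [MulAction G X] [ContinuousSMul G X]
    (c : C(X, ℝ)) (hc : ∀ x, 0 ≤ c x)
    (hnorm : ∀ x : X, ∫ s : G, (c (s⁻¹ • x)) ^ 2 ∂μ = 1)
    (p : G → X → ℝ) (hp : ∀ (s : G) (x : X), p s x = c x * c (s⁻¹ • x)) :
    -- `p` is a continuous function on `G × X`, i.e. an element of `C(G, C(X))`
    Continuous (fun q : G × X => p q.1 q.2) ∧
    -- `p * p = p` in the convolution algebra
    (∀ (t : G) (x : X), ∫ s : G, p s x * p (s⁻¹ * t) (s⁻¹ • x) ∂μ = p t x) ∧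
    -- `p* = p`
    (∀ (t : G) (x : X), p t⁻¹ (t⁻¹ • x) = p t x) := by
  refine ⟨?_, ?_, ?_⟩
  · have : (fun q : G × X => p q.1 q.2) =
        fun q : G × X => c q.2 * c (q.1⁻¹ • q.2) := by
      funext q; exact hp q.1 q.2
    rw [this]
    exact (c.continuous.comp continuous_snd).mul
      (c.continuous.comp ((continuous_fst.inv).smul continuous_snd))
  · intro t x
    have key : ∀ s : G, p s x * p (s⁻¹ * t) (s⁻¹ • x) =
        (c x * c (t⁻¹ • x)) * (c (s⁻¹ • x)) ^ 2 := by
      intro s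
      rw [hp, hp]
      have h1 : (s⁻¹ * t)⁻¹ • s⁻¹ • x = t⁻¹ • x := by
        rw [smul_smul]; congr 1; group
      rw [h1]; ring
    simp_rw [key]
    rw [integral_const_mul, hnorm, mul_one, hp]
  · intro t x
    rw [hp, hp]
    have : t⁻¹⁻¹ • t⁻¹ • x = x := by rw [smul_smul]; simp
    rw [this, mul_comm]
end
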